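/- Let μ* < μ_i for i = 2,...,k, let σ*, σ_i > 0, and let α*, α_i > 0 (i = 2,...,k) satisfy the optimality conditions: (a) α*²/σ*² = ∑_{i=2}^k α_i²/σ_i², and (b) (μ_i − μ*)²/(σ*²/α* + σ_i²/α_i) = (μ_{i'} − μ*)²/(σ*²/α* + σ_{i'}²/α_{i'}) for all i, i' ∈ {2,...,k}. If also β*, β_i > 0 satisfy (a) and (b) and (α*, α₂, ..., α_k) and (β*, β₂, ..., β_k) are both normalized to sum to 1, then they are equal, i.e., the solution of the system (a)–(b) with the normalization constraint is unique. -/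

import Mathlib

open Finset

/-- If two allocations with the same star component satisfy conditions (a) and (b),
and the common rate of the first is strictly smaller, we get a contradiction. -/
private lemma ocba_aux_lt {I : Type*} [Fintype I] [Nonempty I]
    (μstar : ℝ) (μ : I → ℝ) (σstar : ℝ) (σ : I → ℝ)
    (hμ : ∀ i, μstar < μ i) (hσ : ∀ i, 0 < σ i)
    (s : ℝ) (x y : I → ℝ) (hs : 0 < s) (hx : ∀ i, 0 < x i) (hy : ∀ i, 0 < y i)
    (hxA : s ^ 2 / σstar ^ 2 = ∑ i, (x i) ^ 2 / (σ i) ^ 2)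
    (hyA : s ^ 2 / σstar ^ 2 = ∑ i, (y i) ^ 2 / (σ i) ^ 2)
    (cx cy : ℝ)
    (hcx : ∀ i, (μ i - μstar) ^ 2 / (σstar ^ 2 / s + (σ i) ^ 2 / x i) = cx)
    (hcy : ∀ i, (μ i - μstar) ^ 2 / (σstar ^ 2 / s + (σ i) ^ 2 / y i) = cy)
    (hlt : cx < cy) : False := by
  have hd : ∀ i, 0 < (μ i - μstar) ^ 2 := fun i => by
    have h := sub_pos.mpr (hμ i); positivity
  have hDx : ∀ i, 0 < σstar ^ 2 / s + (σ i) ^ 2 / x i := fun i => by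
    have := hσ i; have := hx i; positivity
  have hDy : ∀ i, 0 < σstar ^ 2 / s + (σ i) ^ 2 / y i := fun i => by
    have := hσ i; have := hy i; positivity
  have hxy : ∀ i, x i < y i := by
    intro i
    have h1 : (μ i - μstar) ^ 2 / (σstar ^ 2 / s + (σ i) ^ 2 / x i)
        < (μ i - μstar) ^ 2 / (σstar ^ 2 / s + (σ i) ^ 2 / y i) := by
      rw [hcx i, hcy i]; exact hlt
    have h2 : σstar ^ 2 / s + (σ i) ^ 2 / y i < σstar ^ 2 / s + (σ i) ^ 2 / x i :=
      (div_lt_div_iff_of_pos_left (hd i) (hDx i) (hDy i)).mp h1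
    have h3 : (σ i) ^ 2 / y i < (σ i) ^ 2 / x i := by linarith
    have hσi : 0 < (σ i) ^ 2 := by have := hσ i; positivity
    exact (div_lt_div_iff_of_pos_left hσi (hy i) (hx i)).mp h3
  have hsum : ∑ i, (x i) ^ 2 / (σ i) ^ 2 < ∑ i, (y i) ^ 2 / (σ i) ^ 2 := by
    apply Finset.sum_lt_sum_of_nonempty Finset.univ_nonempty
    intro i _
    have := hx i
    have := hσ i
    gcongr
    exact hxy i
  rw [← hxA, ← hyA] at hsum
  exact lt_irrefl _ hsum

/-- Two allocations with the same star component satisfying (a) and (b) agree. -/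
private lemma ocba_aux_eq {I : Type*} [Fintype I] [Nonempty I]
    (μstar : ℝ) (μ : I → ℝ) (σstar : ℝ) (σ : I → ℝ)
    (hμ : ∀ i, μstar < μ i) (hσ : ∀ i, 0 < σ i)
    (s : ℝ) (x y : I → ℝ) (hs : 0 < s) (hx : ∀ i, 0 < x i) (hy : ∀ i, 0 < y i)
    (hxA : s ^ 2 / σstar ^ 2 = ∑ i, (x i) ^ 2 / (σ i) ^ 2)
    (hyA : s ^ 2 / σstar ^ 2 = ∑ i, (y i) ^ 2 / (σ i) ^ 2)
    (hxB : ∀ i i', (μ i - μstar) ^ 2 / (σstar ^ 2 / s + (σ i) ^ 2 / x i)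
      = (μ i' - μstar) ^ 2 / (σstar ^ 2 / s + (σ i') ^ 2 / x i'))
    (hyB : ∀ i i', (μ i - μstar) ^ 2 / (σstar ^ 2 / s + (σ i) ^ 2 / y i)
      = (μ i' - μstar) ^ 2 / (σstar ^ 2 / s + (σ i') ^ 2 / y i')) :
    x = y := by
  obtain ⟨i₀⟩ := ‹Nonempty I›
  set cx := (μ i₀ - μstar) ^ 2 / (σstar ^ 2 / s + (σ i₀) ^ 2 / x i₀) with hcxdef
  set cy := (μ i₀ - μstar) ^ 2 / (σstar ^ 2 / s + (σ i₀) ^ 2 / y i₀) with hcydef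
  have hcx : ∀ i, (μ i - μstar) ^ 2 / (σstar ^ 2 / s + (σ i) ^ 2 / x i) = cx :=
    fun i => hxB i i₀
  have hcy : ∀ i, (μ i - μstar) ^ 2 / (σstar ^ 2 / s + (σ i) ^ 2 / y i) = cy :=
    fun i => hyB i i₀
  have hceq : cx = cy := by
    rcases lt_trichotomy cx cy with h | h | h
    · exact absurd (ocba_aux_lt μstar μ σstar σ hμ hσ s x y hs hx hy hxA hyA
        cx cy hcx hcy h) id
    · exact h
    · exact absurd (ocba_aux_lt μstar μ σstar σ hμ hσ s y x hs hy hx hyA hxA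
        cy cx hcy hcx h) id
  funext i
  have hd : 0 < (μ i - μstar) ^ 2 := by
    have h := sub_pos.mpr (hμ i); positivity
  have hDx : 0 < σstar ^ 2 / s + (σ i) ^ 2 / x i := by
    have := hσ i; have := hx i; positivity
  have hDy : 0 < σstar ^ 2 / s + (σ i) ^ 2 / y i := by
    have := hσ i; have := hy i; positivity
  have h1 : (μ i - μstar) ^ 2 / (σstar ^ 2 / s + (σ i) ^ 2 / x i)
      = (μ i - μstar) ^ 2 / (σstar ^ 2 / s + (σ i) ^ 2 / y i) := by
    rw [hcx i, hcy i, hceq]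
  have h2 : σstar ^ 2 / s + (σ i) ^ 2 / x i = σstar ^ 2 / s + (σ i) ^ 2 / y i := by
    rcases lt_trichotomy (σstar ^ 2 / s + (σ i) ^ 2 / x i)
        (σstar ^ 2 / s + (σ i) ^ 2 / y i) with h | h | h
    · exact absurd h1 (ne_of_gt (div_lt_div_of_pos_left hd hDx h))
    · exact h
    · exact absurd h1 (ne_of_lt (div_lt_div_of_pos_left hd hDy h))
  have h3 : (σ i) ^ 2 / x i = (σ i) ^ 2 / y i := by linarith
  have hσi : 0 < (σ i) ^ 2 := by have := hσ i; positivity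
  rcases lt_trichotomy (x i) (y i) with h | h | h
  · exact absurd h3.symm (ne_of_lt (div_lt_div_of_pos_left hσi (hx i) h))
  · exact h
  · exact absurd h3 (ne_of_lt (div_lt_div_of_pos_left hσi (hy i) h))

/-- Uniqueness of the rate-optimal OCBA allocation for a single context with
Gaussian sampling: the balance condition (a), the pairwise-rate equality
condition (b), and the normalization to total mass `1` determine the
allocation fractions uniquely. -/
theorem ocba_allocation_unique {I : Type*} [Fintype I] [Nonempty I]
    (μstar : ℝ) (μ : I → ℝ) (σstar : ℝ) (σ : I → ℝ)
    (hμ : ∀ i, μstar < μ i) (hσstar : 0 < σstar) (hσ : ∀ i, 0 < σ i)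
    (αstar : ℝ) (α : I → ℝ) (βstar : ℝ) (β : I → ℝ)
    (hαstar : 0 < αstar) (hα : ∀ i, 0 < α i)
    (hβstar : 0 < βstar) (hβ : ∀ i, 0 < β i)
    (haA : αstar ^ 2 / σstar ^ 2 = ∑ i, (α i) ^ 2 / (σ i) ^ 2)
    (haB : ∀ i i', (μ i - μstar) ^ 2 / (σstar ^ 2 / αstar + (σ i) ^ 2 / α i)
      = (μ i' - μstar) ^ 2 / (σstar ^ 2 / αstar + (σ i') ^ 2 / α i'))
    (hbA : βstar ^ 2 / σstar ^ 2 = ∑ i, (β i) ^ 2 / (σ i) ^ 2)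
    (hbB : ∀ i i', (μ i - μstar) ^ 2 / (σstar ^ 2 / βstar + (σ i) ^ 2 / β i)
      = (μ i' - μstar) ^ 2 / (σstar ^ 2 / βstar + (σ i') ^ 2 / β i'))
    (hnormα : αstar + ∑ i, α i = 1)
    (hnormβ : βstar + ∑ i, β i = 1) :
    βstar = αstar ∧ β = α := by
  -- scale the α-solution so that its star component equals βstar
  set t : ℝ := βstar / αstar with ht
  have htpos : 0 < t := div_pos hβstar hαstar
  have htstar : t * αstar = βstar := div_mul_cancel₀ βstar hαstar.ne'
  set γ : I → ℝ := fun i => t * α i with hγ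
  have hγpos : ∀ i, 0 < γ i := fun i => mul_pos htpos (hα i)
  -- γ satisfies condition (a) with star component βstar
  have hγA : βstar ^ 2 / σstar ^ 2 = ∑ i, (γ i) ^ 2 / (σ i) ^ 2 := by
    have : βstar ^ 2 / σstar ^ 2 = t ^ 2 * (αstar ^ 2 / σstar ^ 2) := by
      rw [← htstar]; ring
    rw [this, haA, Finset.mul_sum]
    refine Finset.sum_congr rfl fun i _ => ?_
    simp only [hγ]; ring
  -- γ satisfies condition (b) with star component βstar
  have hγD : ∀ i, σstar ^ 2 / βstar + (σ i) ^ 2 / γ i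
      = (σstar ^ 2 / αstar + (σ i) ^ 2 / α i) / t := by
    intro i
    rw [← htstar]
    have hαi := (hα i).ne'
    have htne := htpos.ne'
    have hαne := hαstar.ne'
    simp only [hγ]
    field_simp
  have hγB : ∀ i i', (μ i - μstar) ^ 2 / (σstar ^ 2 / βstar + (σ i) ^ 2 / γ i)
      = (μ i' - μstar) ^ 2 / (σstar ^ 2 / βstar + (σ i') ^ 2 / γ i') := by
    intro i i'
    rw [hγD i, hγD i', div_div_eq_mul_div, div_div_eq_mul_div,
      mul_comm ((μ i - μstar) ^ 2) t, mul_comm ((μ i' - μstar) ^ 2) t,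
      mul_div_assoc, mul_div_assoc, haB i i']
  -- by the same-star uniqueness, β = γ
  have hβγ : β = γ :=
    ocba_aux_eq μstar μ σstar σ hμ hσ βstar β γ hβstar hβ hγpos hbA hγA hbB hγB
  -- the normalization forces t = 1
  have hsumγ : ∑ i, γ i = t * ∑ i, α i := by
    rw [Finset.mul_sum]
  have ht1 : t = 1 := by
    have : βstar + ∑ i, β i = t * (αstar + ∑ i, α i) := by
      rw [hβγ, hsumγ, ← htstar]; ring
    rw [hnormβ, hnormα, mul_one] at this
    exact this.symm
  constructor
  · rw [← htstar, ht1, one_mul]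
  · rw [hβγ]
    funext i
    simp [hγ, ht1]
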